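/- Dynamic-programming formula for exponentially weighted iterated sums over ℝ: let x be a d-dimensional real time series of length T, let w = [a_1]…[a_p] be a word (p ≥ 1), let g : {1,…,T} → ℝ, and let α_1,…,α_p ≥ 0 with the convention α_0 := 0. Define the modified series y^{(k)}_s := e^{(α_k − α_{k−1}) g(s)} x_s^{[a_k]} for k = 1,…,p and ν_s := e^{−α_p g(s)}. Then for every 1 ≤ t ≤ T, Σ_{0 < t_1 < ⋯ < t_p ≤ t} e^{α_1(g(t_1)−g(t_2)) + ⋯ + α_{p−1}(g(t_{p−1})−g(t_p)) + α_p(g(t_p)−g(t))} · x_{t_1}^{[a_1]} ⋯ x_{t_p}^{[a_p]} = ν_t · CS_0( y^{(p)} · CS_1( y^{(p−1)} · CS_1( ⋯ y^{(2)} · CS_1( y^{(1)} ) ⋯ ) ) )_t, where · between series is entrywise multiplication. -/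

import Mathlib

/-- The monomial `x_t^{[a]} = ∏_j (x_t^{(j)})^{a_j}`. -/
def mono {d : ℕ} (x : ℕ → Fin d → ℝ) (t : ℕ) (a : Fin d → ℕ) : ℝ :=
  ∏ j, (x t j) ^ (a j)

/-- The shifted cumulative sum `CS_r(z)_s`, equal to `0` for `s ≤ r` and to
`Σ_{j=1}^{s−r} z_j` for `s > r`. -/
def cs (r : ℕ) (z : ℕ → ℝ) : ℕ → ℝ :=
  fun s => ∑ j ∈ Finset.Icc 1 (s - r), z j

/-- The nested expression `z_p ⊙ CS_1( z_{p−1} ⊙ ⋯ ⊙ CS_1(z_1) ⋯)`, where the input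
list is given in reversed order `[z_p, z_{p−1}, …, z_1]` and `⊙` is the entrywise
product of series. -/
def nestL : List (ℕ → ℝ) → ℕ → ℝ
  | [] => fun _ => 1
  | [z] => z
  | z :: z' :: w => fun t => z t * cs 1 (nestL (z' :: w)) t

open Finset

lemma snoc_strictMono {n : ℕ} {f : Fin n → ℕ} (hf : StrictMono f) {s : ℕ}
    (hs : ∀ k, f k < s) : StrictMono (Fin.snoc f s : Fin (n+1) → ℕ) := by
  intro i j hij
  rcases Fin.eq_castSucc_or_eq_last j with ⟨j', rfl⟩ | rfl
  · rcases Fin.eq_castSucc_or_eq_last i with ⟨i', rfl⟩ | rfl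
    · simp only [Fin.snoc_castSucc]
      exact hf (Fin.castSucc_lt_castSucc_iff.mp hij)
    · exact absurd hij (by simp [Fin.lt_iff_val_lt_val])
  · rcases Fin.eq_castSucc_or_eq_last i with ⟨i', rfl⟩ | rfl
    · simp only [Fin.snoc_castSucc, Fin.snoc_last]
      exact hs i'
    · exact absurd hij (lt_irrefl _)

lemma iss_step (n : ℕ) (z : Fin (n+1) → ℕ → ℝ) (t : ℕ) :
    (∑ tv ∈ (Fintype.piFinset fun _ : Fin (n+1) => Finset.Ioc 0 t).filter
        (fun tv => StrictMono tv), ∏ k, z k (tv k))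
    = ∑ s ∈ Finset.Ioc 0 t, z (Fin.last n) s *
        ∑ tv ∈ (Fintype.piFinset fun _ : Fin n => Finset.Ioc 0 (s-1)).filter
          (fun tv => StrictMono tv), ∏ k, z (Fin.castSucc k) (tv k) := by
  classical
  simp_rw [Finset.mul_sum]
  have key : (∑ tv ∈ (Fintype.piFinset fun _ : Fin (n+1) => Finset.Ioc 0 t).filter
        (fun tv => StrictMono tv), ∏ k, z k (tv k))
      = ∑ x ∈ (Finset.Ioc 0 t).sigma (fun s =>
          (Fintype.piFinset fun _ : Fin n => Finset.Ioc 0 (s-1)).filter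
            (fun tv => StrictMono tv)),
          z (Fin.last n) x.1 * ∏ k, z k.castSucc (x.2 k) := by
    refine Finset.sum_nbij' (i := fun tv => ⟨tv (Fin.last n), fun k => tv k.castSucc⟩)
      (j := fun x => Fin.snoc x.2 x.1) ?_ ?_ ?_ ?_ ?_
    · rintro tv htv
      rw [Finset.mem_filter, Fintype.mem_piFinset] at htv
      obtain ⟨hmem, hsm⟩ := htv
      rw [Finset.mem_sigma]
      refine ⟨hmem _, ?_⟩
      rw [Finset.mem_filter, Fintype.mem_piFinset]
      refine ⟨fun k => ?_, fun i j h => hsm (Fin.castSucc_lt_castSucc_iff.mpr h)⟩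
      have h1 := (Finset.mem_Ioc.mp (hmem k.castSucc)).1
      have h2 : tv k.castSucc < tv (Fin.last n) := hsm (Fin.castSucc_lt_last k)
      rw [Finset.mem_Ioc]
      dsimp only
      omega
    · rintro ⟨s, tv⟩ hx
      rw [Finset.mem_sigma] at hx
      obtain ⟨hs, htv⟩ := hx
      rw [Finset.mem_filter, Fintype.mem_piFinset] at htv
      obtain ⟨hmem, hsm⟩ := htv
      rw [Finset.mem_Ioc] at hs
      dsimp only at hmem hsm hs ⊢
      rw [Finset.mem_filter, Fintype.mem_piFinset]
      constructor
      · intro k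
        refine Fin.lastCases ?_ (fun k => ?_) k
        · simp only [Fin.snoc_last]; exact Finset.mem_Ioc.mpr hs
        · simp only [Fin.snoc_castSucc]
          have h3 := Finset.mem_Ioc.mp (hmem k)
          rw [Finset.mem_Ioc]
          omega
      · refine snoc_strictMono hsm (fun k => ?_)
        have h3 := Finset.mem_Ioc.mp (hmem k)
        omega
    · intro tv _
      exact Fin.snoc_init_self tv
    · rintro ⟨s, tv⟩ _
      refine Sigma.ext (by simp) ?_
      simp [Fin.snoc_castSucc]
    · intro tv _
      rw [Fin.prod_univ_castSucc]
      ring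
  rw [key, Finset.sum_sigma]

lemma iss_eq (n : ℕ) (z : Fin (n+1) → ℕ → ℝ) (t : ℕ) :
    (∑ tv ∈ (Fintype.piFinset fun _ : Fin (n+1) => Finset.Ioc 0 t).filter
        (fun tv => StrictMono tv), ∏ k, z k (tv k))
    = cs 0 (nestL ((List.ofFn z).reverse)) t := by
  induction n generalizing t with
  | zero =>
    rw [iss_step]
    have hrev : (List.ofFn z).reverse = [z 0] := by
      simp [List.ofFn_succ]
    rw [hrev]
    show _ = ∑ j ∈ Finset.Icc 1 (t - 0), z 0 j
    rw [show Finset.Icc 1 (t-0) = Finset.Ioc 0 t from by rw [← Finset.Icc_add_one_left_eq_Ioc]; rfl]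
    refine Finset.sum_congr rfl fun s _ => ?_
    rw [show ∑ tv ∈ (Fintype.piFinset fun _ : Fin 0 => Finset.Ioc 0 (s-1)).filter
          (fun tv => StrictMono tv), ∏ k, z (Fin.castSucc k) (tv k) = 1 from ?_]
    · show z 0 s * 1 = z 0 s
      rw [mul_one]
    · rw [Finset.sum_eq_single (fun i => i.elim0)]
      · simp
      · intro b hb hne
        exact absurd (funext fun i => i.elim0) hne
      · intro h
        exact absurd (by
          rw [Finset.mem_filter, Fintype.mem_piFinset]
          exact ⟨fun i => i.elim0, fun i => i.elim0⟩) h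
  | succ m ih =>
    rw [iss_step]
    have hrev : (List.ofFn z).reverse
        = z (Fin.last (m+1)) :: (List.ofFn (fun k : Fin (m+1) => z k.castSucc)).reverse := by
      rw [List.ofFn_succ', List.concat_eq_append, List.reverse_append]
      rfl
    obtain ⟨h0, tl, htl⟩ : ∃ h0 tl, (List.ofFn (fun k : Fin (m+1) => z k.castSucc)).reverse
        = h0 :: tl := by
      have hne : (List.ofFn (fun k : Fin (m+1) => z k.castSucc)).reverse ≠ [] := by
        simp
      exact List.exists_cons_of_ne_nil hne
    rw [hrev, htl]
    show _ = ∑ j ∈ Finset.Icc 1 (t - 0), (z (Fin.last (m+1)) j * cs 1 (nestL (h0 :: tl)) j)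
    rw [show Finset.Icc 1 (t-0) = Finset.Ioc 0 t from by rw [← Finset.Icc_add_one_left_eq_Ioc]; rfl]
    refine Finset.sum_congr rfl fun s _ => ?_
    rw [ih (fun k => z k.castSucc) (s-1), htl]
    congr 1

lemma tele (q : ℕ) (g α : ℕ → ℝ) (hα0 : α 0 = 0) (tv : Fin (q+1) → ℕ) (t : ℕ) :
    ∑ k : Fin (q+1), α (k.1 + 1) *
        (g (tv k) - if h : k.1 + 1 < q+1 then g (tv ⟨k.1 + 1, h⟩) else g t)
    = (∑ k : Fin (q+1), (α (k.1+1) - α k.1) * g (tv k)) - α (q+1) * g t := by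
  have h1 : (∑ k : Fin (q+1), α (k.1 + 1) *
        (if h : k.1 + 1 < q+1 then g (tv ⟨k.1 + 1, h⟩) else g t))
      = α (q+1) * g t + ∑ k : Fin (q+1), α k.1 * g (tv k) := by
    rw [Fin.sum_univ_castSucc, Fin.sum_univ_succ]
    simp only [Fin.val_last, dif_neg (lt_irrefl (q+1)), Fin.coe_castSucc, Fin.val_succ,
      Fin.val_zero, hα0, zero_mul, zero_add]
    rw [add_comm]
    congr 1
    refine Finset.sum_congr rfl fun k _ => ?_
    rw [dif_pos (by omega : k.1 + 1 < q + 1)]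
    rfl
  simp_rw [mul_sub, sub_mul]
  rw [Finset.sum_sub_distrib, Finset.sum_sub_distrib, h1]
  ring

open scoped Classical in
/-- Dynamic-programming formula for exponentially weighted iterated sums over ℝ:
with `α_0 := 0`, `α_1,…,α_p ≥ 0`, modified series
`y^{(k)}_s := e^{(α_k − α_{k−1}) g(s)} x_s^{[a_k]}` and `ν_s := e^{−α_p g(s)}`, for
every `1 ≤ t ≤ T` the weighted iterated sum
`Σ_{0 < t_1 < ⋯ < t_p ≤ t} e^{α_1(g(t_1)−g(t_2)) + ⋯ + α_p(g(t_p)−g(t))} x_{t_1}^{[a_1]} ⋯ x_{t_p}^{[a_p]}`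
equals `ν_t · CS_0( y^{(p)} · CS_1( y^{(p−1)} · ⋯ · CS_1( y^{(1)} ) ⋯ ) )_t`. -/
theorem weighted_iss_dynamic_programming (d T p : ℕ) (hp : 1 ≤ p)
    (x : ℕ → Fin d → ℝ) (a : Fin p → Fin d → ℕ)
    (ha : ∀ k, ∃ j, a k j ≠ 0)
    (g : ℕ → ℝ) (α : ℕ → ℝ) (hα0 : α 0 = 0)
    (hα : ∀ k, 1 ≤ k → k ≤ p → 0 ≤ α k)
    (y : Fin p → ℕ → ℝ)
    (hy : ∀ (k : Fin p) (s : ℕ),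
      y k s = Real.exp ((α (k.1 + 1) - α k.1) * g s) * mono x s (a k))
    (t : ℕ) (ht1 : 1 ≤ t) (htT : t ≤ T) :
    ∑ tv ∈ (Fintype.piFinset fun _ : Fin p => Finset.Ioc 0 t).filter
        (fun tv => StrictMono tv),
      Real.exp (∑ k : Fin p, α (k.1 + 1) *
          (g (tv k) - if h : k.1 + 1 < p then g (tv ⟨k.1 + 1, h⟩) else g t)) *
        ∏ k, mono x (tv k) (a k)
      = Real.exp (-(α p) * g t) * cs 0 (nestL ((List.ofFn y).reverse)) t := by
  obtain ⟨q, rfl⟩ : ∃ q, p = q + 1 := ⟨p - 1, by omega⟩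
  have hsummand : ∀ tv : Fin (q+1) → ℕ,
      Real.exp (∑ k : Fin (q+1), α (k.1 + 1) *
          (g (tv k) - if h : k.1 + 1 < q+1 then g (tv ⟨k.1 + 1, h⟩) else g t)) *
        ∏ k, mono x (tv k) (a k)
      = Real.exp (-(α (q+1)) * g t) * ∏ k, y k (tv k) := by
    intro tv
    rw [tele q g α hα0 tv t]
    have hprod : ∏ k, y k (tv k)
        = Real.exp (∑ k : Fin (q+1), (α (k.1+1) - α k.1) * g (tv k)) *
          ∏ k, mono x (tv k) (a k) := by
      simp_rw [hy]
      rw [Finset.prod_mul_distrib, ← Real.exp_sum]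
    rw [hprod, ← mul_assoc, ← Real.exp_add]
    congr 2
    ring
  rw [Finset.sum_congr rfl fun tv _ => hsummand tv, ← Finset.mul_sum, iss_eq q y t]
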